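/- (Equivalent form of the claims of Example 3.4 of the paper, transported to the slit plane.) Let N = ℝ² ∖ {(0, t) : −1 ≤ t ≤ 1}, the Minkowski plane with a closed vertical segment removed. Then there is no future-directed timelike curve in N from (−1,−2) to (1,2), so d_N((−1,−2), (1,2)) = 0; yet every point p = (p₁, p₂) ∈ ℝ² with p₂ + |p₁ + 1| < −2 (equivalently, every point p with a future-directed timelike curve in N from p to (−1,−2)) satisfies d_N(p, (1,2)) ≥ 2√2. Consequently, d_N : N × N → [0,∞] is discontinuous at ((−1,−2), (1,2)). -/

import Mathlib

open Set
open scoped ENNReal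

/-- A vector of the Minkowski plane (first coordinate space, second coordinate time)
is future-directed timelike. -/
def FDTimelike (v : ℝ × ℝ) : Prop := |v.1| < v.2

/-- A future-directed timelike curve in `M ⊆ ℝ²` from `p` to `q`: a piecewise `C¹`
map `γ : [0,1] → M` all of whose one-sided derivatives are future-directed timelike. -/
def IsTimelikeCurveIn (M : Set (ℝ × ℝ)) (γ : ℝ → ℝ × ℝ) (p q : ℝ × ℝ) : Prop :=
  γ 0 = p ∧ γ 1 = q ∧ (∀ s ∈ Set.Icc (0 : ℝ) 1, γ s ∈ M) ∧
  ∃ (m : ℕ) (t : ℕ → ℝ), 0 < m ∧ t 0 = 0 ∧ t m = 1 ∧ (∀ j < m, t j < t (j + 1)) ∧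
    ∀ j < m,
      ContDiffOn ℝ 1 γ (Set.Icc (t j) (t (j + 1))) ∧
      ∀ s ∈ Set.Icc (t j) (t (j + 1)),
        FDTimelike (derivWithin γ (Set.Icc (t j) (t (j + 1))) s)

/-- The Lorentzian length of a curve in the Minkowski plane. -/
noncomputable def Llen (γ : ℝ → ℝ × ℝ) : ℝ :=
  ∫ s in (0 : ℝ)..1, Real.sqrt ((deriv γ s).2 ^ 2 - (deriv γ s).1 ^ 2)

/-- The Lorentzian distance of `M ⊆ ℝ²`. -/
noncomputable def LorDist (M : Set (ℝ × ℝ)) (p q : ℝ × ℝ) : ℝ≥0∞ :=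
  ⨆ (γ : ℝ → ℝ × ℝ) (_ : IsTimelikeCurveIn M γ p q), ENNReal.ofReal (Llen γ)


/-- The Minkowski plane with the closed segment `{0} × [−1,1]` removed. -/
def Nslit : Set (ℝ × ℝ) := {p : ℝ × ℝ | ¬ (p.1 = 0 ∧ -1 ≤ p.2 ∧ p.2 ≤ 1)}

/-- Example 3.4 transported to the slit plane: there is no timelike curve in `N`
from `(−1,−2)` to `(1,2)`, so `d((−1,−2),(1,2)) = 0`; yet every `p` with
`p₂ + |p₁ + 1| < −2` satisfies `d(p,(1,2)) ≥ 2√2`; consequently `d` is discontinuous at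
`((−1,−2),(1,2))`. -/
lemma contOn_union_closed {f : ℝ → ℝ × ℝ} {s t : Set ℝ} (hsc : IsClosed s) (htc : IsClosed t)
    (hs : ContinuousOn f s) (ht : ContinuousOn f t) : ContinuousOn f (s ∪ t) := by
  intro x hx
  have h1 : ContinuousWithinAt f s x := by
    by_cases h : x ∈ s
    · exact hs x h
    · exact continuousWithinAt_of_notMem_closure (by rwa [hsc.closure_eq])
  have h2 : ContinuousWithinAt f t x := by
    by_cases h : x ∈ t
    · exact ht x h
    · exact continuousWithinAt_of_notMem_closure (by rwa [htc.closure_eq])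
  exact h1.union h2

lemma no_curve : ¬ ∃ γ : ℝ → ℝ × ℝ,
    IsTimelikeCurveIn Nslit γ ((-1 : ℝ), (-2 : ℝ)) ((1 : ℝ), (2 : ℝ)) := by
  rintro ⟨γ, h0, h1, hmem, m, t, hm, ht0, htm, hlt, hpc⟩
  set f : ℝ → ℝ := fun s => (γ s).2 - (γ s).1 with hf
  have piece : ∀ j < m, StrictMonoOn f (Icc (t j) (t (j + 1))) ∧
      ContinuousOn γ (Icc (t j) (t (j + 1))) := by
    intro j hj
    obtain ⟨hcd, hfd⟩ := hpc j hj
    have hcont : ContinuousOn γ (Icc (t j) (t (j + 1))) := hcd.continuousOn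
    refine ⟨?_, hcont⟩
    apply strictMonoOn_of_hasDerivWithinAt_pos (convex_Icc _ _) (hcont.snd.sub hcont.fst)
      (f' := fun x => (derivWithin γ (Icc (t j) (t (j + 1))) x).2 -
        (derivWithin γ (Icc (t j) (t (j + 1))) x).1)
    · intro x hx
      have hxI : x ∈ Icc (t j) (t (j + 1)) := interior_subset hx
      have hd : HasDerivWithinAt γ (derivWithin γ (Icc (t j) (t (j + 1))) x)
          (Icc (t j) (t (j + 1))) x :=
        (hcd.differentiableOn one_ne_zero x hxI).hasDerivWithinAt
      have hd2 := (ContinuousLinearMap.snd ℝ ℝ ℝ).hasFDerivAt.comp_hasDerivWithinAt x hd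
      have hd1 := (ContinuousLinearMap.fst ℝ ℝ ℝ).hasFDerivAt.comp_hasDerivWithinAt x hd
      exact ((hd2.sub hd1).mono interior_subset)
    · intro x hx
      have := hfd x (interior_subset hx)
      simp only [FDTimelike, abs_lt] at this
      linarith [this.1, this.2]
  have tmon : ∀ k ≤ m, t 0 ≤ t k := by
    intro k hk
    induction k with
    | zero => exact le_rfl
    | succ n ih => exact le_trans (ih (by omega)) (hlt n (by omega)).le
  have glue : ∀ k ≤ m, StrictMonoOn f (Icc (t 0) (t k)) ∧ ContinuousOn γ (Icc (t 0) (t k)) := by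
    intro k hk
    induction k with
    | zero =>
      rw [Icc_self]
      constructor
      · intro x hx y hy hxy
        rw [mem_singleton_iff] at hx hy
        rw [hx, hy] at hxy
        exact absurd hxy (lt_irrefl _)
      · exact continuousOn_singleton _ _
    | succ n ih =>
      have hn : n < m := by omega
      obtain ⟨ihm, ihc⟩ := ih (by omega)
      have h0n := tmon n (by omega)
      have hnn := (hlt n hn).le
      rw [← Icc_union_Icc_eq_Icc h0n hnn]
      obtain ⟨pm, pc⟩ := piece n hn
      exact ⟨ihm.union pm (isGreatest_Icc h0n) (isLeast_Icc hnn),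
        contOn_union_closed isClosed_Icc isClosed_Icc ihc pc⟩
  obtain ⟨fmono, γcont⟩ := glue m le_rfl
  rw [ht0, htm] at fmono γcont
  have e0 : (γ 0).1 = -1 := by rw [h0]
  have e1 : (γ 1).1 = 1 := by rw [h1]
  have h0' : (0 : ℝ) ∈ Icc ((fun s => (γ s).1) 0) ((fun s => (γ s).1) 1) := by
    simp only [e0, e1]
    constructor <;> norm_num
  obtain ⟨s₀, hs₀mem, hs₀⟩ := intermediate_value_Icc (by norm_num : (0:ℝ) ≤ 1) γcont.fst h0'
  have hs₀' : (γ s₀).1 = 0 := hs₀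
  have hs0ne : s₀ ≠ 0 := by
    intro h; rw [h, e0] at hs₀'; norm_num at hs₀'
  have hs1ne : s₀ ≠ 1 := by
    intro h; rw [h, e1] at hs₀'; norm_num at hs₀'
  have m1 := fmono (left_mem_Icc.2 zero_le_one) hs₀mem
    (lt_of_le_of_ne hs₀mem.1 (Ne.symm hs0ne))
  have m2 := fmono hs₀mem (right_mem_Icc.2 zero_le_one) (lt_of_le_of_ne hs₀mem.2 hs1ne)
  simp only [hf, h0, h1] at m1 m2
  rw [hs₀'] at m1 m2
  norm_num at m1 m2
  exact hmem s₀ hs₀mem ⟨hs₀', by linarith, by linarith⟩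

lemma hder_aux (b k s : ℝ) : HasDerivAt (fun x : ℝ => b + k * x) k s := by
  simpa using ((hasDerivAt_id s).const_mul k).const_add b

lemma key3 (p : ℝ × ℝ) (hp : p.2 + |p.1 + 1| < -2) :
    ENNReal.ofReal (2 * Real.sqrt 2) ≤ LorDist Nslit p ((1 : ℝ), (2 : ℝ)) := by
  obtain ⟨p1, p2⟩ := p
  simp only at hp
  have ha1 : p1 + 1 ≤ |p1 + 1| := le_abs_self _
  have ha2 : -(p1 + 1) ≤ |p1 + 1| := neg_le_abs _
  have ha0 : 0 ≤ |p1 + 1| := abs_nonneg _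
  set a := |p1 + 1| with hadef
  have hε0 : (0 : ℝ) < -2 - a - p2 := by linarith
  set c := min (-2 - a - p2) 2 / 2 with hc
  have hc0 : 0 < c := by
    rw [hc]; have := lt_min hε0 (by norm_num : (0:ℝ) < 2); linarith
  have hc1 : c ≤ 1 := by rw [hc]; have := min_le_right (-2 - a - p2) 2; linarith
  have hcε : c < -2 - a - p2 := by
    rw [hc]; have := min_le_left (-2 - a - p2) 2; linarith
  have hp2 : p2 < -2 := by linarith
  have hT1l : -(-1 - p2) < c - p1 := by linarith
  have hT1r : c - p1 < -1 - p2 := by linarith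
  set A : ℝ → ℝ × ℝ := fun s => (p1 + (2 * (c - p1)) * s, p2 + (2 * (-1 - p2)) * s) with hA
  set B : ℝ → ℝ × ℝ := fun s => ((2 * c - 1) + (2 * (1 - c)) * s, -4 + 6 * s) with hB
  set γ : ℝ → ℝ × ℝ := fun s => if s ≤ 1 / 2 then A s else B s with hγ
  have hAd : ∀ s, HasDerivAt A (2 * (c - p1), 2 * (-1 - p2)) s :=
    fun s => (hder_aux _ _ s).prodMk (hder_aux _ _ s)
  have hBd : ∀ s, HasDerivAt B (2 * (1 - c), 6) s :=
    fun s => (hder_aux _ _ s).prodMk (hder_aux _ _ s)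
  have hEq1 : EqOn γ A (Icc 0 (1 / 2)) := fun s hs => if_pos hs.2
  have hEq2 : EqOn γ B (Icc (1 / 2) 1) := by
    intro s hs
    rcases eq_or_lt_of_le hs.1 with h | h
    · rw [← h]
      have hg : γ (1 / 2) = A (1 / 2) := hEq1 (by norm_num)
      rw [hg, hA, hB]
      simp only [Prod.mk.injEq]
      constructor <;> ring
    · exact if_neg (not_le.2 h)
  have hcurve : IsTimelikeCurveIn Nslit γ (p1, p2) (1, 2) := by
    refine ⟨?_, ?_, ?_, 2, fun j => (j : ℝ) / 2, by norm_num, by norm_num, by norm_num, ?_, ?_⟩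
    · norm_num [hγ, hA]
    · norm_num [hγ, hB]
      ring
    · intro s hs
      simp only [hγ]
      by_cases h2 : s ≤ 1 / 2
      · rw [if_pos h2, hA]
        rintro ⟨hx, hy1, -⟩
        simp only at hx hy1
        have hpos : (0 : ℝ) < -1 - p2 := by linarith
        have h1' : (-1 - p2) * 1 ≤ (-1 - p2) * (2 * s) := by nlinarith
        have h2s : (1 : ℝ) ≤ 2 * s := le_of_mul_le_mul_left h1' hpos
        have hs12 : s = 1 / 2 := by linarith
        rw [hs12] at hx
        have : c = 0 := by linarith
        exact absurd this (ne_of_gt hc0)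
      · rw [if_neg h2, hB]
        have hspos : 1 / 2 < s := not_le.1 h2
        have hxpos : (0 : ℝ) < (2 * c - 1) + (2 * (1 - c)) * s := by
          nlinarith [mul_nonneg (by linarith : (0:ℝ) ≤ 1 - c) (by linarith : (0:ℝ) ≤ 2 * s - 1)]
        rintro ⟨hx, -, -⟩
        simp only at hx
        exact absurd hx (ne_of_gt hxpos)
    · intro j hj
      push_cast
      linarith
    · intro j hj
      interval_cases j
      · have he : Icc (((0 : ℕ) : ℝ) / 2) (((0 + 1 : ℕ) : ℝ) / 2) = Icc (0 : ℝ) (1 / 2) := by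
          norm_num
        rw [he]
        constructor
        · refine ContDiffOn.congr ?_ hEq1
          have hAcd : ContDiff ℝ 1 A := by
            rw [hA]
            exact (contDiff_const.add (contDiff_const.mul contDiff_id)).prodMk
              (contDiff_const.add (contDiff_const.mul contDiff_id))
          exact hAcd.contDiffOn
        · intro s hs
          have hd : HasDerivWithinAt γ (2 * (c - p1), 2 * (-1 - p2)) (Icc 0 (1 / 2)) s :=
            ((hAd s).hasDerivWithinAt).congr (fun x hx => hEq1 hx) (hEq1 hs)
          rw [hd.derivWithin (uniqueDiffOn_Icc (by norm_num) s hs)]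
          show |2 * (c - p1)| < 2 * (-1 - p2)
          rw [abs_lt]
          constructor <;> linarith
      · have he : Icc (((1 : ℕ) : ℝ) / 2) (((1 + 1 : ℕ) : ℝ) / 2) = Icc (1 / 2 : ℝ) 1 := by
          norm_num
        rw [he]
        constructor
        · refine ContDiffOn.congr ?_ hEq2
          have hBcd : ContDiff ℝ 1 B := by
            rw [hB]
            exact (contDiff_const.add (contDiff_const.mul contDiff_id)).prodMk
              (contDiff_const.add (contDiff_const.mul contDiff_id))
          exact hBcd.contDiffOn
        · intro s hs
          have hd : HasDerivWithinAt γ (2 * (1 - c), 6) (Icc (1 / 2) 1) s :=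
            ((hBd s).hasDerivWithinAt).congr (fun x hx => hEq2 hx) (hEq2 hs)
          rw [hd.derivWithin (uniqueDiffOn_Icc (by norm_num) s hs)]
          show |2 * (1 - c)| < 6
          rw [abs_lt]
          constructor <;> linarith
  -- Now estimate the length of γ from below.
  have hg1 : ∀ s : ℝ, s < 1 / 2 → deriv γ s = (2 * (c - p1), 2 * (-1 - p2)) := by
    intro s hs
    have hev : γ =ᶠ[nhds s] A := by
      filter_upwards [Iic_mem_nhds hs] with x hx
      exact if_pos hx
    rw [hev.deriv_eq, (hAd s).deriv]
  have hg2 : ∀ s : ℝ, 1 / 2 < s → deriv γ s = (2 * (1 - c), 6) := by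
    intro s hs
    have hev : γ =ᶠ[nhds s] B := by
      filter_upwards [Ioi_mem_nhds hs] with x hx
      exact if_neg (not_le.2 hx)
    rw [hev.deriv_eq, (hBd s).deriv]
  set g : ℝ → ℝ := fun s => Real.sqrt ((deriv γ s).2 ^ 2 - (deriv γ s).1 ^ 2) with hgdef
  set C₁ : ℝ := Real.sqrt ((2 * (-1 - p2)) ^ 2 - (2 * (c - p1)) ^ 2) with hC1
  set C₂ : ℝ := Real.sqrt ((6 : ℝ) ^ 2 - (2 * (1 - c)) ^ 2) with hC2
  have hne : ∀ᵐ x : ℝ, x ≠ 1 / 2 :=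
    MeasureTheory.compl_mem_ae_iff.2 (MeasureTheory.measure_singleton _)
  have hi1 : IntervalIntegrable g MeasureTheory.volume 0 (1 / 2) := by
    apply (intervalIntegrable_const (c := C₁)).congr_ae
    filter_upwards [MeasureTheory.ae_restrict_mem measurableSet_uIoc,
      MeasureTheory.ae_restrict_of_ae hne] with x hx hxne
    rw [Set.uIoc_of_le (by norm_num : (0:ℝ) ≤ 1 / 2)] at hx
    simp only [hgdef]
    rw [hg1 x (lt_of_le_of_ne hx.2 hxne), hC1]
  have hi2 : IntervalIntegrable g MeasureTheory.volume (1 / 2) 1 := by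
    apply (intervalIntegrable_const (c := C₂)).congr_ae
    filter_upwards [MeasureTheory.ae_restrict_mem measurableSet_uIoc] with x hx
    rw [Set.uIoc_of_le (by norm_num : (1/2:ℝ) ≤ 1)] at hx
    simp only [hgdef]
    rw [hg2 x hx.1, hC2]
  have hval2 : ∫ s in (1/2 : ℝ)..1, g s = C₂ / 2 := by
    rw [intervalIntegral.integral_congr_ae (g := fun _ => C₂)
      (Filter.Eventually.of_forall fun x hx => by
        rw [Set.uIoc_of_le (by norm_num : (1/2:ℝ) ≤ 1)] at hx
        simp only [hgdef]
        rw [hg2 x hx.1, hC2])]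
    rw [intervalIntegral.integral_const]
    norm_num
    ring
  have hll : Llen γ = (∫ s in (0:ℝ)..(1/2), g s) + ∫ s in (1/2:ℝ)..1, g s := by
    have h0 : Llen γ = ∫ s in (0:ℝ)..1, g s := rfl
    rw [h0, ← intervalIntegral.integral_add_adjacent_intervals hi1 hi2]
  have hI1 : 0 ≤ ∫ s in (0:ℝ)..(1/2), g s :=
    intervalIntegral.integral_nonneg (by norm_num) (fun u _ => Real.sqrt_nonneg _)
  have h32 : (32 : ℝ) ≤ 6 ^ 2 - (2 * (1 - c)) ^ 2 := by nlinarith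
  have hsqrt32 : Real.sqrt 32 = 4 * Real.sqrt 2 := by
    rw [show (32:ℝ) = 4 ^ 2 * 2 by norm_num, Real.sqrt_mul (by positivity),
      Real.sqrt_sq (by norm_num : (0:ℝ) ≤ 4)]
  have hC2ge : 4 * Real.sqrt 2 ≤ C₂ := by
    rw [hC2, ← hsqrt32]
    exact Real.sqrt_le_sqrt h32
  have hLlen : 2 * Real.sqrt 2 ≤ Llen γ := by
    rw [hll, hval2]
    linarith
  calc ENNReal.ofReal (2 * Real.sqrt 2) ≤ ENNReal.ofReal (Llen γ) :=
        ENNReal.ofReal_le_ofReal hLlen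
    _ ≤ LorDist Nslit (p1, p2) (1, 2) :=
        le_iSup₂ (f := fun (γ : ℝ → ℝ × ℝ) (_ : IsTimelikeCurveIn Nslit γ (p1, p2) (1, 2)) =>
          ENNReal.ofReal (Llen γ)) γ hcurve

theorem stmt_12 :
    (¬ ∃ γ : ℝ → ℝ × ℝ, IsTimelikeCurveIn Nslit γ ((-1 : ℝ), (-2 : ℝ)) ((1 : ℝ), (2 : ℝ))) ∧
    LorDist Nslit ((-1 : ℝ), (-2 : ℝ)) ((1 : ℝ), (2 : ℝ)) = 0 ∧
    (∀ p : ℝ × ℝ, p.2 + |p.1 + 1| < -2 →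
      ENNReal.ofReal (2 * Real.sqrt 2) ≤ LorDist Nslit p ((1 : ℝ), (2 : ℝ))) ∧
    ¬ ContinuousWithinAt (fun pq : (ℝ × ℝ) × (ℝ × ℝ) => LorDist Nslit pq.1 pq.2)
        (Nslit ×ˢ Nslit) (((-1 : ℝ), (-2 : ℝ)), ((1 : ℝ), (2 : ℝ))) := by
  refine ⟨no_curve, ?_, fun p hp => key3 p hp, ?_⟩
  · -- the distance is zero since there is no curve
    apply le_antisymm _ zero_le
    refine iSup_le fun γ => iSup_le fun hγ => ?_
    exact absurd ⟨γ, hγ⟩ no_curve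
  · -- discontinuity
    intro hcont
    have hzero : LorDist Nslit ((-1 : ℝ), (-2 : ℝ)) ((1 : ℝ), (2 : ℝ)) = 0 := by
      apply le_antisymm _ zero_le
      refine iSup_le fun γ => iSup_le fun hγ => ?_
      exact absurd ⟨γ, hγ⟩ no_curve
    set x₀ : (ℝ × ℝ) × (ℝ × ℝ) := (((-1 : ℝ), (-2 : ℝ)), ((1 : ℝ), (2 : ℝ))) with hx₀
    set seq : ℕ → (ℝ × ℝ) × (ℝ × ℝ) :=
      fun n => (((-1 : ℝ), (-2 : ℝ) - 1 / (n + 1)), ((1 : ℝ), (2 : ℝ))) with hseq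
    have htend : Filter.Tendsto seq Filter.atTop (nhds x₀) := by
      rw [hx₀, hseq]
      have h1 : Filter.Tendsto (fun n : ℕ => (-2 : ℝ) - 1 / (n + 1)) Filter.atTop
          (nhds (-2 : ℝ)) := by
        have := tendsto_one_div_add_atTop_nhds_zero_nat (𝕜 := ℝ)
        have h2 := this.const_sub (-2 : ℝ)
        simpa using h2
      exact (tendsto_const_nhds.prodMk_nhds h1).prodMk_nhds tendsto_const_nhds
    have hmemseq : ∀ n, seq n ∈ Nslit ×ˢ Nslit := by
      intro n
      constructor
      · intro hcon
        exact absurd hcon.1 (by norm_num)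
      · intro hcon
        exact absurd hcon.1 (by norm_num)
    have htend' : Filter.Tendsto seq Filter.atTop (nhdsWithin x₀ (Nslit ×ˢ Nslit)) :=
      tendsto_nhdsWithin_of_tendsto_nhds_of_eventually_within seq htend
        (Filter.Eventually.of_forall hmemseq)
    have hc := (hcont.tendsto.comp htend')
    have hge : ∀ n, ENNReal.ofReal (2 * Real.sqrt 2) ≤
        (fun pq : (ℝ × ℝ) × (ℝ × ℝ) => LorDist Nslit pq.1 pq.2) (seq n) := by
      intro n
      apply key3
      have hpos : (0 : ℝ) < 1 / (n + 1) := by positivity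
      simp only [hseq]
      norm_num
      linarith
    have hfin : ENNReal.ofReal (2 * Real.sqrt 2) ≤
        LorDist Nslit ((-1 : ℝ), (-2 : ℝ)) ((1 : ℝ), (2 : ℝ)) := ge_of_tendsto' hc hge
    rw [hzero] at hfin
    have hpos : (0 : ℝ≥0∞) < ENNReal.ofReal (2 * Real.sqrt 2) := by
      rw [ENNReal.ofReal_pos]
      positivity
    exact absurd (le_zero_iff.1 hfin) hpos.ne'
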